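/- Let M, n, k be positive integers with k ≤ M. Then the number of labelled n-vertex subgraphs of a graph with M edges that use exactly k edges is at most C(M, k)·n!, and if C(M, k)·n! ≤ (n/(3s))^{k} for some s with k = n·e/v where a balanced graph F has v vertices, e edges and s = v, then there is a lift of F not contained in G. -/

import Mathlib

/-- The number of edges of `G` spanned by a vertex set `s`. -/
noncomputable def edgeCountIn {V : Type*} (G : SimpleGraph V) (s : Set V) : ℕ :=
  {e ∈ G.edgeSet | ∀ v ∈ e, v ∈ s}.ncard

/-- `H` is a lift of `F`: all edges of `H` lie above edges of `F`, and above every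
edge of `F` the edges of `H` form a perfect matching between the two fibers. -/
def IsLift {α : Type*} (F : SimpleGraph α) {p : ℕ} (H : SimpleGraph (α × Fin p)) : Prop :=
  (∀ (a b : α) (x y : Fin p), H.Adj (a, x) (b, y) → F.Adj a b) ∧
  (∀ a b : α, F.Adj a b → ∀ x : Fin p, ∃! y : Fin p, H.Adj (a, x) (b, y)) ∧
  (∀ a b : α, F.Adj a b → ∀ y : Fin p, ∃! x : Fin p, H.Adj (a, x) (b, y))


namespace CML

open Function

variable {W U : Type*} [Fintype W] [Fintype U]

/-- vertex support of a finset of edges -/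
abbrev Vs {W : Type*} (S : Finset (Sym2 W)) : Type _ := {w : W // ∃ e ∈ S, w ∈ e}

/-- recover a graph on `U` from an edge set `S` in `W` and a partial labelling -/
def recov {W U : Type*} (S : Finset (Sym2 W)) (h : Vs S → U) : SimpleGraph U where
  Adj a b := a ≠ b ∧ ∃ w1 w2 : Vs S, h w1 = a ∧ h w2 = b ∧ s(w1.1, w2.1) ∈ S
  symm := by
    refine ⟨?_⟩
    rintro a b ⟨hne, w1, w2, h1, h2, hS⟩
    exact ⟨hne.symm, w2, w1, h2, h1, by rwa [Sym2.eq_swap]⟩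
  loopless := ⟨fun a h => h.1 rfl⟩

lemma recov_adj {W U : Type*} (S : Finset (Sym2 W)) (h : Vs S → U) (a b : U) :
    (recov S h).Adj a b ↔ a ≠ b ∧ ∃ w1 w2 : Vs S, h w1 = a ∧ h w2 = b ∧ s(w1.1, w2.1) ∈ S :=
  Iff.rfl

/-- the image edge set -/
noncomputable def Sof {W U : Type*} [Fintype U] (f : U → W) (H : SimpleGraph U) :
    Finset (Sym2 W) :=
  (Set.toFinite (Sym2.map f '' H.edgeSet)).toFinset

lemma mem_Sof {W U : Type*} [Fintype U] {f : U → W} {H : SimpleGraph U} {e : Sym2 W} :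
    e ∈ Sof f H ↔ e ∈ Sym2.map f '' H.edgeSet := Set.Finite.mem_toFinset _

lemma card_Sof {W U : Type*} [Fintype U] {f : U → W} (hf : Injective f) (H : SimpleGraph U) :
    (Sof f H).card = H.edgeSet.ncard := by
  rw [Sof, ← Set.ncard_eq_toFinset_card (Sym2.map f '' H.edgeSet)]
  exact Set.ncard_image_of_injective _ (Sym2.map.injective hf)

noncomputable def hof {W U : Type*} [Fintype U] [Nonempty U] (f : U → W) (H : SimpleGraph U) :
    Vs (Sof f H) → U := fun w => Function.invFun f w.1

lemma vs_range {W U : Type*} [Fintype U] {f : U → W} {H : SimpleGraph U} (w : Vs (Sof f H)) :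
    w.1 ∈ Set.range f := by
  obtain ⟨e, he, hwe⟩ := w.2
  rw [mem_Sof] at he
  obtain ⟨e', _, rfl⟩ := he
  obtain ⟨a, _, hfa⟩ := Sym2.mem_map.1 hwe
  exact ⟨a, hfa⟩

lemma hof_injective {W U : Type*} [Fintype U] [Nonempty U] {f : U → W} (hf : Injective f)
    (H : SimpleGraph U) : Injective (hof f H) := by
  intro w1 w2 hw
  obtain ⟨a1, ha1⟩ := vs_range (f := f) (H := H) w1
  obtain ⟨a2, ha2⟩ := vs_range (f := f) (H := H) w2
  apply Subtype.ext
  simp only [hof] at hw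
  rw [← ha1, ← ha2, Function.leftInverse_invFun hf a1, Function.leftInverse_invFun hf a2] at hw
  rw [← ha1, ← ha2, hw]

lemma recov_eq {W U : Type*} [Fintype U] [Nonempty U] {f : U → W} (hf : Injective f)
    (H : SimpleGraph U) : recov (Sof f H) (hof f H) = H := by
  ext a b
  rw [recov_adj]
  constructor
  · rintro ⟨hne, w1, w2, h1, h2, hS⟩
    rw [mem_Sof] at hS
    obtain ⟨e', he', heq⟩ := hS
    induction e' using Sym2.ind with
    | _ c d =>
      rw [SimpleGraph.mem_edgeSet] at he'
      rw [Sym2.map_pair_eq, Sym2.eq_iff] at heq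
      have hinv : ∀ (u : U), Function.invFun f (f u) = u := fun u =>
        Function.leftInverse_invFun hf u
      rcases heq with ⟨hc, hd⟩ | ⟨hc, hd⟩
      · have ha : a = c := by rw [← h1]; simp only [hof]; rw [← hc]; exact hinv c
        have hb : b = d := by rw [← h2]; simp only [hof]; rw [← hd]; exact hinv d
        rw [ha, hb]; exact he'
      · have ha : a = d := by rw [← h1]; simp only [hof]; rw [← hd]; exact hinv d
        have hb : b = c := by rw [← h2]; simp only [hof]; rw [← hc]; exact hinv c
        rw [ha, hb]; exact he'.symm
  · intro hadj
    have hmem : s(f a, f b) ∈ Sof f H := by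
      rw [mem_Sof]
      exact ⟨s(a, b), hadj, Sym2.map_pair_eq f a b⟩
    have hma : f a ∈ Set.range f := ⟨a, rfl⟩
    refine ⟨hadj.ne, ⟨f a, s(f a, f b), hmem, by simp⟩, ⟨f b, s(f a, f b), hmem, by simp⟩,
      ?_, ?_, hmem⟩
    · simp only [hof]; exact Function.leftInverse_invFun hf a
    · simp only [hof]; exact Function.leftInverse_invFun hf b

lemma descFactorial_le_factorial (n t : ℕ) : n.descFactorial t ≤ n.factorial := by
  rcases le_or_gt t n with h | h
  · rw [Nat.descFactorial_eq_div h]; exact Nat.div_le_self _ _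
  · simp [Nat.descFactorial_eq_zero_iff_lt.2 h]

lemma part1 {W : Type*} [Fintype W] (G : SimpleGraph W) (M n k : ℕ)
    (hM : G.edgeSet.ncard = M) (hk : 0 < k)
    (U : Type) [Fintype U] (hU : Fintype.card U = n) :
    Nat.card {H : SimpleGraph U // H.edgeSet.ncard = k ∧
        ∃ f : U → W, Function.Injective f ∧
          ∀ a b : U, H.Adj a b → G.Adj (f a) (f b)} ≤ M.choose k * n.factorial := by
  classical
  set Sub := {H : SimpleGraph U // H.edgeSet.ncard = k ∧
        ∃ f : U → W, Function.Injective f ∧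
          ∀ a b : U, H.Adj a b → G.Adj (f a) (f b)} with hSub
  rcases isEmpty_or_nonempty Sub with hE | hNE
  · rw [Nat.card_of_isEmpty]; exact Nat.zero_le _
  haveI : Nonempty U := by
    obtain ⟨⟨H, hHk, _⟩⟩ := hNE
    obtain ⟨e, he⟩ := Set.nonempty_of_ncard_ne_zero (by omega : H.edgeSet.ncard ≠ 0)
    revert he
    induction e using Sym2.ind with
    | _ a b => exact fun _ => ⟨a⟩
  set T := Σ S : {S : Finset (Sym2 W) // S ∈ G.edgeFinset.powersetCard k},
      (Vs S.1 ↪ U) with hT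
  -- witness function
  let fx : Sub → (U → W) := fun x => x.2.2.choose
  have hfi : ∀ x : Sub, Injective (fx x) := fun x => x.2.2.choose_spec.1
  have hfh : ∀ x : Sub, ∀ a b : U, x.1.Adj a b → G.Adj (fx x a) (fx x b) :=
    fun x => x.2.2.choose_spec.2
  have hmem : ∀ x : Sub, Sof (fx x) x.1 ∈ G.edgeFinset.powersetCard k := by
    intro x
    rw [Finset.mem_powersetCard]
    constructor
    · intro e he
      rw [mem_Sof] at he
      obtain ⟨e', he', rfl⟩ := he
      induction e' using Sym2.ind with
      | _ a b =>
        rw [SimpleGraph.mem_edgeSet] at he'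
        rw [Sym2.map_pair_eq, SimpleGraph.mem_edgeFinset, SimpleGraph.mem_edgeSet]
        exact hfh x a b he'
    · rw [card_Sof (hfi x)]; exact x.2.1
  let Φ : Sub → T := fun x =>
    ⟨⟨Sof (fx x) x.1, hmem x⟩, ⟨hof (fx x) x.1, hof_injective (hfi x) x.1⟩⟩
  have hrec : ∀ x : Sub, recov (Φ x).1.1 (fun w => (Φ x).2 w) = x.1 := by
    intro x
    exact recov_eq (hfi x) x.1
  have hΦinj : Injective Φ := by
    intro x1 x2 h
    apply Subtype.ext
    rw [← hrec x1, ← hrec x2, h]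
  have hle : Nat.card Sub ≤ Nat.card T := Nat.card_le_card_of_injective Φ hΦinj
  refine hle.trans ?_
  rw [Nat.card_eq_fintype_card, Fintype.card_sigma]
  have hbound : ∀ S : {S : Finset (Sym2 W) // S ∈ G.edgeFinset.powersetCard k},
      Fintype.card (Vs S.1 ↪ U) ≤ n.factorial := by
    intro S
    rw [Fintype.card_embedding_eq, hU]
    exact descFactorial_le_factorial n _
  calc ∑ S : {S : Finset (Sym2 W) // S ∈ G.edgeFinset.powersetCard k},
        Fintype.card (Vs S.1 ↪ U)
      ≤ Fintype.card {S : Finset (Sym2 W) // S ∈ G.edgeFinset.powersetCard k} * n.factorial := by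
        rw [← smul_eq_mul, ← Finset.card_univ]
        exact Finset.sum_le_card_nsmul _ _ _ (fun S _ => hbound S)
    _ = M.choose k * n.factorial := by
        rw [Fintype.card_coe, Finset.card_powersetCard]
        congr 2
        rw [← hM, SimpleGraph.edgeFinset, Set.ncard_eq_toFinset_card']

end CML


namespace CML2

open Function

variable {α : Type*}

/-- oriented edges of `F`, one per edge -/
abbrev D [Fintype α] (F : SimpleGraph α) (ord : α ≃ Fin (Fintype.card α)) : Type _ :=
  {q : α × α // F.Adj q.1 q.2 ∧ ord q.1 < ord q.2}

/-- the lift graph determined by a family of permutations -/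
def Psi [Fintype α] (F : SimpleGraph α) (ord : α ≃ Fin (Fintype.card α)) {p : ℕ}
    (π : D F ord → Equiv.Perm (Fin p)) : SimpleGraph (α × Fin p) where
  Adj u w := ∃ d : D F ord,
    (d.1.1 = u.1 ∧ d.1.2 = w.1 ∧ π d u.2 = w.2) ∨ (d.1.1 = w.1 ∧ d.1.2 = u.1 ∧ π d w.2 = u.2)
  symm := by
    refine ⟨?_⟩
    rintro u w ⟨d, h | h⟩
    · exact ⟨d, Or.inr h⟩
    · exact ⟨d, Or.inl h⟩
  loopless := by
    refine ⟨?_⟩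
    rintro u ⟨d, ⟨h1, h2, _⟩ | ⟨h1, h2, _⟩⟩ <;> exact d.2.1.ne (h1.trans h2.symm)

variable [Fintype α] {F : SimpleGraph α} {ord : α ≃ Fin (Fintype.card α)} {p : ℕ}

lemma psi_adj (π : D F ord → Equiv.Perm (Fin p)) (u w : α × Fin p) :
    (Psi F ord π).Adj u w ↔ ∃ d : D F ord,
      (d.1.1 = u.1 ∧ d.1.2 = w.1 ∧ π d u.2 = w.2) ∨
      (d.1.1 = w.1 ∧ d.1.2 = u.1 ∧ π d w.2 = u.2) := Iff.rfl

lemma d_eq {d d' : D F ord} (h1 : d.1.1 = d'.1.1) (h2 : d.1.2 = d'.1.2) : d = d' :=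
  Subtype.ext (Prod.ext h1 h2)

lemma isLift_psi (π : D F ord → Equiv.Perm (Fin p)) :
    (∀ (a b : α) (x y : Fin p), (Psi F ord π).Adj (a, x) (b, y) → F.Adj a b) ∧
    (∀ a b : α, F.Adj a b → ∀ x : Fin p, ∃! y : Fin p, (Psi F ord π).Adj (a, x) (b, y)) ∧
    (∀ a b : α, F.Adj a b → ∀ y : Fin p, ∃! x : Fin p, (Psi F ord π).Adj (a, x) (b, y)) := by
  have key : ∀ a b : α, F.Adj a b → ∀ x : Fin p,
      ∃! y : Fin p, (Psi F ord π).Adj (a, x) (b, y) := by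
    intro a b hab x
    rcases lt_trichotomy (ord a) (ord b) with hlt | heq | hgt
    · set d : D F ord := ⟨(a, b), hab, hlt⟩ with hd
      refine ⟨π d x, ⟨d, Or.inl ⟨rfl, rfl, rfl⟩⟩, ?_⟩
      rintro y' ⟨d', ⟨h1, h2, h3⟩ | ⟨h1, h2, h3⟩⟩
      · have hdd : d' = d := d_eq h1 h2
        rw [hdd] at h3
        exact h3.symm
      · have hlt' := d'.2.2
        rw [h1, h2] at hlt'
        exact absurd hlt' (lt_asymm hlt)
    · exact absurd (ord.injective heq) hab.ne
    · set d : D F ord := ⟨(b, a), hab.symm, hgt⟩ with hd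
      refine ⟨(π d)⁻¹ x, ⟨d, Or.inr ⟨rfl, rfl, Equiv.apply_symm_apply _ _⟩⟩, ?_⟩
      rintro y' ⟨d', ⟨h1, h2, h3⟩ | ⟨h1, h2, h3⟩⟩
      · have hlt' := d'.2.2
        rw [h1, h2] at hlt'
        exact absurd hlt' (lt_asymm hgt)
      · have hdd : d' = d := d_eq h1 h2
        rw [hdd] at h3
        exact (π d).injective (by rw [show (π d) ((π d)⁻¹ x) = x from Equiv.apply_symm_apply _ _]; exact h3)
  refine ⟨?_, key, ?_⟩
  · rintro a b x y ⟨d, ⟨h1, h2, _⟩ | ⟨h1, h2, _⟩⟩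
    · have := d.2.1
      rw [h1, h2] at this
      exact this
    · have := d.2.1
      rw [h1, h2] at this
      exact this.symm
  · intro a b hab y
    obtain ⟨x0, hx0, hu⟩ := key b a hab.symm y
    exact ⟨x0, hx0.symm, fun x' hx' => hu x' hx'.symm⟩

lemma psi_injective : Injective (Psi F ord (p := p)) := by
  intro π1 π2 h
  funext d
  apply Equiv.ext
  intro x
  have hadj : (Psi F ord π1).Adj (d.1.1, x) (d.1.2, π1 d x) := ⟨d, Or.inl ⟨rfl, rfl, rfl⟩⟩
  rw [h] at hadj
  obtain ⟨d', ⟨h1, h2, h3⟩ | ⟨h1, h2, h3⟩⟩ := hadj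
  · rw [d_eq h1 h2] at h3
    exact h3.symm
  · have hlt' := d'.2.2
    rw [h1, h2] at hlt'
    exact absurd hlt' (lt_asymm d.2.2)

lemma card_D : Nat.card (D F ord) = F.edgeSet.ncard := by
  rw [← Nat.card_coe_set_eq]
  apply Nat.card_eq_of_bijective (fun d => (⟨s(d.1.1, d.1.2), d.2.1⟩ : F.edgeSet))
  constructor
  · intro d1 d2 h
    have h' : s(d1.1.1, d1.1.2) = s(d2.1.1, d2.1.2) := congrArg Subtype.val h
    rw [Sym2.eq_iff] at h'
    rcases h' with ⟨ha, hb⟩ | ⟨ha, hb⟩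
    · exact d_eq ha hb
    · have h1 := d1.2.2
      have h2 := d2.2.2
      rw [ha, hb] at h1
      exact absurd h1 (lt_asymm h2)
  · rintro ⟨e, he⟩
    induction e using Sym2.ind with
    | _ a b =>
      rw [SimpleGraph.mem_edgeSet] at he
      rcases lt_trichotomy (ord a) (ord b) with hlt | heq | hgt
      · exact ⟨⟨(a, b), he, hlt⟩, Subtype.ext rfl⟩
      · exact absurd (ord.injective heq) he.ne
      · exact ⟨⟨(b, a), he.symm, hgt⟩, Subtype.ext (Sym2.eq_swap)⟩

lemma psi_edgeSet_ncard (π : D F ord → Equiv.Perm (Fin p)) :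
    (Psi F ord π).edgeSet.ncard = F.edgeSet.ncard * p := by
  have hbij : Nat.card (D F ord × Fin p) = Nat.card ((Psi F ord π).edgeSet) := by
    apply Nat.card_eq_of_bijective (fun q =>
      (⟨s((q.1.1.1, q.2), (q.1.1.2, π q.1 q.2)),
        (Psi F ord π).mem_edgeSet.2 ⟨q.1, Or.inl ⟨rfl, rfl, rfl⟩⟩⟩ : (Psi F ord π).edgeSet))
    constructor
    · rintro ⟨d1, x1⟩ ⟨d2, x2⟩ h
      have h' : s(((d1.1.1 : α), x1), (d1.1.2, π d1 x1)) = s((d2.1.1, x2), (d2.1.2, π d2 x2)) :=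
        congrArg Subtype.val h
      rw [Sym2.eq_iff] at h'
      rcases h' with ⟨ha, hb⟩ | ⟨ha, hb⟩
      · rw [Prod.ext_iff] at ha hb
        exact Prod.ext (d_eq ha.1 hb.1) ha.2
      · rw [Prod.ext_iff] at ha hb
        have ha1 : (d1.1.1 : α) = d2.1.2 := ha.1
        have hb1 : (d1.1.2 : α) = d2.1.1 := hb.1
        have h1 := d1.2.2
        have h2 := d2.2.2
        rw [ha1, hb1] at h1
        exact absurd h1 (lt_asymm h2)
    · rintro ⟨e, he⟩
      induction e using Sym2.ind with
      | _ u w =>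
        rw [SimpleGraph.mem_edgeSet] at he
        obtain ⟨d, ⟨h1, h2, h3⟩ | ⟨h1, h2, h3⟩⟩ := he
        · refine ⟨(d, u.2), Subtype.ext ?_⟩
          show s(((d.1.1 : α), u.2), (d.1.2, π d u.2)) = s(u, w)
          rw [Sym2.eq_iff]
          exact Or.inl ⟨Prod.ext h1 rfl, Prod.ext h2 h3⟩
        · refine ⟨(d, w.2), Subtype.ext ?_⟩
          show s(((d.1.1 : α), w.2), (d.1.2, π d w.2)) = s(u, w)
          rw [Sym2.eq_iff]
          exact Or.inr ⟨Prod.ext h1 rfl, Prod.ext h2 h3⟩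

  rw [← Nat.card_coe_set_eq, ← hbij, Nat.card_prod, card_D,
    Nat.card_eq_fintype_card, Fintype.card_fin]

lemma pow_lt_three_pow_mul_factorial : ∀ q : ℕ, 1 ≤ q → (q : ℝ) ^ q < 3 ^ q * q.factorial := by
  have hexp3 : Real.exp 1 < 3 := lt_trans Real.exp_one_lt_d9 (by norm_num)
  intro q hq
  induction q, hq using Nat.le_induction with
  | base => norm_num
  | succ q hq ih =>
    have hq0 : (0 : ℝ) < q := by exact_mod_cast hq
    have hkey : ((q : ℝ) + 1) ^ q ≤ Real.exp 1 * q ^ q := by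
      have h1 : (q : ℝ) + 1 = q * (1 / q + 1) := by field_simp; ring
      have h2 : (1 / (q : ℝ) + 1) ≤ Real.exp (1 / q) := Real.add_one_le_exp _
      have h3 : ((q : ℝ) + 1) ^ q ≤ (q * Real.exp (1 / q)) ^ q := by
        apply pow_le_pow_left₀ (by positivity)
        rw [h1]
        exact mul_le_mul_of_nonneg_left h2 (le_of_lt hq0)
      calc ((q : ℝ) + 1) ^ q ≤ (q * Real.exp (1 / q)) ^ q := h3
        _ = q ^ q * Real.exp (1 / q) ^ q := mul_pow _ _ _
        _ = q ^ q * Real.exp 1 := by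
            rw [← Real.exp_nat_mul]
            congr 1
            field_simp
        _ = Real.exp 1 * q ^ q := by ring
    have hfq : (0 : ℝ) < (q.factorial : ℝ) := by exact_mod_cast q.factorial_pos
    have ihq := ih
    push_cast
    calc ((q : ℝ) + 1) ^ (q + 1) = ((q : ℝ) + 1) * ((q : ℝ) + 1) ^ q := by ring
      _ ≤ ((q : ℝ) + 1) * (Real.exp 1 * q ^ q) := by
          apply mul_le_mul_of_nonneg_left hkey (by positivity)
      _ < ((q : ℝ) + 1) * (3 * q ^ q) := by
          apply mul_lt_mul_of_pos_left _ (by positivity)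
          exact mul_lt_mul_of_pos_right hexp3 (by positivity)
      _ ≤ ((q : ℝ) + 1) * (3 * (3 ^ q * q.factorial)) := by
          apply mul_le_mul_of_nonneg_left _ (by positivity)
          exact mul_le_mul_of_nonneg_left (le_of_lt ihq) (by norm_num)
      _ = 3 ^ (q + 1) * (((q : ℝ) + 1) * q.factorial) := by ring
      _ = 3 ^ (q + 1) * (q + 1).factorial := by
          rw [Nat.factorial_succ]
          push_cast
          ring

end CML2


theorem counting_missing_lift {W : Type*} [Fintype W] (G : SimpleGraph W)
    (M n k : ℕ) (hM : G.edgeSet.ncard = M) (hk : 0 < k) (hkM : k ≤ M) :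
    (∀ (U : Type) [Fintype U], Fintype.card U = n →
      Nat.card {H : SimpleGraph U // H.edgeSet.ncard = k ∧
          ∃ f : U → W, Function.Injective f ∧
            ∀ a b : U, H.Adj a b → G.Adj (f a) (f b)}
        ≤ M.choose k * n.factorial) ∧
    (∀ (α : Type) [Fintype α] (F : SimpleGraph α) (p : ℕ), 0 < p →
      (∀ s : Set α, s.Nonempty →
        (edgeCountIn F s : ℚ) * Fintype.card α ≤ (F.edgeSet.ncard : ℚ) * s.ncard) →
      Fintype.card α ≤ F.edgeSet.ncard →
      n = Fintype.card α * p →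
      k = n * F.edgeSet.ncard / Fintype.card α →
      ((M.choose k * n.factorial : ℝ) ≤ ((n : ℝ) / (3 * Fintype.card α)) ^ k) →
      ∃ H : SimpleGraph (α × Fin p), IsLift F H ∧
        ¬ ∃ f : α × Fin p → W, Function.Injective f ∧
          ∀ a b : α × Fin p, H.Adj a b → G.Adj (f a) (f b)) := by
  constructor
  · intro U _ hU
    exact CML.part1 G M n k hM hk U hU
  · intro α _ F p hp hbal hve hn hkeq hrc
    classical
    have hv : 0 < Fintype.card α := by
      rcases Nat.eq_zero_or_pos (Fintype.card α) with h0 | h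
      · exfalso
        rw [h0, zero_mul] at hn
        rw [hn] at hkeq
        simp at hkeq
        omega
      · exact h
    have hkpe : k = p * F.edgeSet.ncard := by
      rw [hkeq, hn, mul_assoc, Nat.mul_div_cancel_left _ hv]
    have he : 0 < F.edgeSet.ncard := by
      rcases Nat.eq_zero_or_pos F.edgeSet.ncard with h0 | h
      · rw [h0, mul_zero] at hkpe; omega
      · exact h
    by_contra hcon
    push_neg at hcon
    set ord := Fintype.equivFin α with hord
    have hcount : ∀ π : CML2.D F ord → Equiv.Perm (Fin p),
        (CML2.Psi F ord π).edgeSet.ncard = k := by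
      intro π
      rw [CML2.psi_edgeSet_ncard, hkpe, mul_comm]
    have hlift : ∀ π : CML2.D F ord → Equiv.Perm (Fin p), IsLift F (CML2.Psi F ord π) :=
      fun π => CML2.isLift_psi π
    let Φ : (CML2.D F ord → Equiv.Perm (Fin p)) →
        {H : SimpleGraph (α × Fin p) // H.edgeSet.ncard = k ∧
          ∃ f : α × Fin p → W, Function.Injective f ∧
            ∀ a b : α × Fin p, H.Adj a b → G.Adj (f a) (f b)} :=
      fun π => ⟨CML2.Psi F ord π, hcount π, hcon _ (hlift π)⟩
    have hΦinj : Function.Injective Φ := fun π1 π2 h =>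
      CML2.psi_injective (congrArg Subtype.val h)
    have h1 := CML.part1 G M n k hM hk (α × Fin p)
      (by rw [Fintype.card_prod, Fintype.card_fin, ← hn])
    have h2 : Nat.card (CML2.D F ord → Equiv.Perm (Fin p)) ≤ M.choose k * n.factorial :=
      le_trans (Nat.card_le_card_of_injective Φ hΦinj) h1
    have h3 : Nat.card (CML2.D F ord → Equiv.Perm (Fin p))
        = p.factorial ^ F.edgeSet.ncard := by
      rw [Nat.card_fun, Nat.card_eq_fintype_card, Fintype.card_perm, Fintype.card_fin,
        CML2.card_D]
    rw [h3] at h2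
    have h4 : ((p.factorial : ℝ)) ^ F.edgeSet.ncard ≤ ((n : ℝ) / (3 * Fintype.card α)) ^ k := by
      refine le_trans ?_ hrc
      exact_mod_cast h2
    have h5 : ((n : ℝ) / (3 * Fintype.card α)) = (p : ℝ) / 3 := by
      have hv' : (Fintype.card α : ℝ) ≠ 0 := by positivity
      rw [hn]
      push_cast
      field_simp
    have hfact := CML2.pow_lt_three_pow_mul_factorial p hp
    have h6 : ((p : ℝ) / 3) ^ p < (p.factorial : ℝ) := by
      rw [div_pow, div_lt_iff₀ (by positivity)]
      calc (p : ℝ) ^ p < 3 ^ p * p.factorial := hfact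
        _ = p.factorial * 3 ^ p := by ring
    have h7 : ((p : ℝ) / 3) ^ k < (p.factorial : ℝ) ^ F.edgeSet.ncard := by
      rw [hkpe, pow_mul]
      exact pow_lt_pow_left₀ h6 (by positivity) he.ne'
    rw [h5] at h4
    linarith
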